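/- For every positive integer i and every real x > 0, F^{(i)}(x) = F(x) - ∑_{l=1}^{i} (-1)^{l-1}(l-1)!/x^l. -/

import Mathlib

open MeasureTheory Set Real

lemma g_int {c : ℝ} (hc : 0 < c) :
    IntegrableOn (fun u => Real.exp (-u) / u) (Set.Ioi c) := by
  have h1 : IntegrableOn (fun u => Real.exp (-u) / c) (Set.Ioi c) := by
    simpa [IntegrableOn, neg_mul, one_mul, div_eq_mul_inv] using
      (exp_neg_integrableOn_Ioi c (by norm_num : (0:ℝ) < 1)).mul_const c⁻¹
  refine h1.mono' ?_ ?_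
  · exact (Measurable.aestronglyMeasurable ((Real.measurable_exp.comp measurable_neg).div measurable_id)).restrict
  · filter_upwards [ae_restrict_mem measurableSet_Ioi] with u hu
    rw [Set.mem_Ioi] at hu
    have hu0 : 0 < u := hc.trans hu
    rw [Real.norm_eq_abs, abs_div, abs_of_pos (Real.exp_pos _), abs_of_pos hu0]
    gcongr


noncomputable def G (x : ℝ) : ℝ := ∫ u in Set.Ioi x, Real.exp (-u) / u

noncomputable def F (x : ℝ) : ℝ := ∫ t in Set.Ioi (0:ℝ), Real.exp (-t) / (t + x)

lemma F_eq (x : ℝ) : F x = Real.exp x * G x := by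
  have h1 : ∀ t : ℝ, Real.exp (-t) / (t + x) =
      Real.exp x * (Real.exp (-(t + x)) / (t + x)) := by
    intro t
    rw [← mul_div_assoc, ← Real.exp_add]
    ring_nf
  have h2 : (∫ t in Set.Ioi (0:ℝ), Real.exp (-(t + x)) / (t + x)) = G x := by
    have := MeasureTheory.integral_add_right_eq_self
      (μ := volume) ((Set.Ioi x).indicator (fun u => Real.exp (-u) / u)) x
    rw [G, ← integral_indicator measurableSet_Ioi,
      ← integral_indicator measurableSet_Ioi, ← this]
    congr 1
    ext t
    by_cases ht : t ∈ Set.Ioi (0:ℝ)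
    · rw [Set.indicator_of_mem ht, Set.indicator_of_mem (by simpa using ht)]
    · rw [Set.indicator_of_notMem ht, Set.indicator_of_notMem (by simpa using ht)]
  rw [F]
  simp_rw [h1]
  rw [integral_const_mul, h2]

lemma G_deriv {x : ℝ} (hx : 0 < x) :
    HasDerivAt G (-(Real.exp (-x) / x)) x := by
  set g : ℝ → ℝ := fun u => Real.exp (-u) / u with hg
  set c : ℝ := x / 2 with hcdef
  have hc : 0 < c := by positivity
  have hcx : c < x := by rw [hcdef]; linarith
  have hint : IntegrableOn g (Set.Ioi c) := g_int hc
  -- for y > c : G y = G c - ∫ t in c..y, g t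
  have key : ∀ y ∈ Set.Ioi c, G y = G c - ∫ t in c..y, g t := by
    intro y hy
    rw [Set.mem_Ioi] at hy
    have hsplit : (Set.Ioi c) = Set.Ioc c y ∪ Set.Ioi y := (Set.Ioc_union_Ioi_eq_Ioi hy.le).symm
    have : G c = (∫ t in Set.Ioc c y, g t) + ∫ t in Set.Ioi y, g t := by
      rw [G, hsplit, setIntegral_union (Set.Ioc_disjoint_Ioi le_rfl) measurableSet_Ioi
        (hint.mono_set (by rw [hsplit]; exact Set.subset_union_left))
        (hint.mono_set (by rw [hsplit]; exact Set.subset_union_right))]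
    rw [intervalIntegral.integral_of_le hy.le, this, G]
    ring
  have h1 : HasDerivAt (fun y => ∫ t in c..y, g t) (g x) x := by
    refine intervalIntegral.integral_hasDerivAt_right ?_ ?_ ?_
    · rw [intervalIntegrable_iff_integrableOn_Ioc_of_le hcx.le]
      exact hint.mono_set Set.Ioc_subset_Ioi_self
    · exact ((Real.measurable_exp.comp measurable_neg).div
        measurable_id).stronglyMeasurable.stronglyMeasurableAtFilter
    · exact ((Real.continuous_exp.comp continuous_neg).continuousAt).div
        continuousAt_id (ne_of_gt hx)
  have hd : HasDerivAt (fun y => G c - ∫ t in c..y, g t) (-(g x)) x := h1.const_sub (G c)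
  exact hd.congr_of_eventuallyEq
    (Filter.eventuallyEq_of_mem (Ioi_mem_nhds hcx) key)

lemma F_deriv {x : ℝ} (hx : 0 < x) : HasDerivAt F (F x - 1/x) x := by
  have h : HasDerivAt (fun y => Real.exp y * G y)
      (Real.exp x * G x + Real.exp x * (-(Real.exp (-x) / x))) x :=
    HasDerivAt.mul (Real.hasDerivAt_exp x) (G_deriv hx)
  have hFfun : F = fun y => Real.exp y * G y := funext fun y => F_eq y
  rw [hFfun]
  convert h using 1
  have h2 : Real.exp x * (Real.exp (-x) / x) = 1 / x := by
    rw [Real.exp_neg, ← mul_div_assoc, mul_inv_cancel₀ (Real.exp_pos x).ne']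
  rw [mul_neg, h2]
  show Real.exp x * G x - 1/x = _
  ring

lemma term_deriv (m : ℕ) {x : ℝ} (hx : 0 < x) :
    HasDerivAt (fun y : ℝ => (-1:ℝ)^m * (Nat.factorial m) / y^(m+1))
      (-((-1:ℝ)^m * (Nat.factorial (m+1)) / x^(m+2))) x := by
  have h := ((hasDerivAt_pow (m+1) x).inv (pow_ne_zero _ hx.ne')).const_mul
    ((-1:ℝ)^m * (Nat.factorial m))
  simp only [div_eq_mul_inv]
  refine h.congr_deriv ?_
  have hxne : x ≠ 0 := hx.ne'
  simp only [Nat.add_sub_cancel]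
  rw [Nat.factorial_succ]
  push_cast
  field_simp
  ring

noncomputable def T (m : ℕ) (y : ℝ) : ℝ := (-1:ℝ)^m * (Nat.factorial m) / y^(m+1)

lemma main_claim (i : ℕ) (hi : 1 ≤ i) : ∀ x : ℝ, 0 < x →
    iteratedDeriv i F x = F x - ∑ m ∈ Finset.range i, T m x := by
  induction i, hi using Nat.le_induction with
  | base =>
    intro x hx
    rw [iteratedDeriv_one, (F_deriv hx).deriv]
    simp [T]
  | succ i hi ih =>
    intro x hx
    rw [iteratedDeriv_succ]
    have hev : iteratedDeriv i F =ᶠ[nhds x]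
        fun y => F y - ∑ m ∈ Finset.range i, T m y := by
      filter_upwards [Ioi_mem_nhds hx] with y hy
      exact ih y hy
    rw [hev.deriv_eq]
    have hd : HasDerivAt (fun y => F y - ∑ m ∈ Finset.range i, T m y)
        ((F x - 1/x) - ∑ m ∈ Finset.range i,
          (-((-1:ℝ)^m * (Nat.factorial (m+1)) / x^(m+2)))) x := by
      exact (F_deriv hx).sub (HasDerivAt.fun_sum fun m _ => term_deriv m hx)
    rw [hd.deriv, Finset.sum_range_succ']
    have hT0 : T 0 x = 1 / x := by simp [T]
    have hTs : ∀ m, T (m+1) x = -((-1:ℝ)^m * (Nat.factorial (m+1)) / x^(m+2)) := by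
      intro m
      simp only [T, pow_succ]
      ring_nf
    rw [hT0]
    simp_rw [hTs]
    ring

theorem stmt_2 (i : ℕ) (hi : 1 ≤ i) (x : ℝ) (hx : 0 < x) :
    iteratedDeriv i F x =
      F x - ∑ l ∈ Finset.Icc 1 i, (-1 : ℝ) ^ (l - 1) * (Nat.factorial (l - 1)) / x ^ l := by
  rw [main_claim i hi x hx]
  congr 1
  rw [← Finset.Ico_add_one_right_eq_Icc, Finset.sum_Ico_eq_sum_range]
  simp only [Nat.add_sub_cancel, Nat.succ_sub_one]
  apply Finset.sum_congr rfl
  intro m _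
  simp [T, Nat.add_sub_cancel_left, add_comm 1 m]
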